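/- arXiv:1307.4488 — 3 statements merged into one kernel-verified Lean document; each statement's English description precedes it below -/
import Mathlib

section
/- For the adjunction T ⊣ U between presheaves Pre(O_F, U) and G-spaces GU, where U(Y)(G/H) = Y^H and T(X) = X_{G/e}: the counit ε: TU → Id is the identity natural transformation, U is full and faithful, and T(Y(G/H)) ≅ G/H where Y(G/H) is the presheaf represented by G/H. -/
/-!
STATEMENT 16: For the adjunction `T ⊣ U` between presheaves `Pre(O_F, U)` on
the orbit category `O_F` and `G`-spaces/`G`-objects, where
`U(Y)(G/H) = Y^H = Hom(G/H, Y)` is the fixed-point (restricted-Yoneda)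
presheaf functor and `T(X) = X_{G/e}` is evaluation at the orbit `G/e`:
the counit `ε : TU ⟶ Id` is an isomorphism (the identity), `U` is full and
faithful, and `T` carries the presheaf represented by `G/H` to `G/H`.

Formalization (the discrete shadow of the topological statement): `G`-objects
are functors `SingleObj G ⥤ Type u`; `O_F` is the full subcategory on the
orbit objects `G ⧸ H` for `H` in a family `F` of subgroups (closed under
subgroups and conjugation and containing the trivial subgroup); `U` is the
restricted Yoneda functor, so that `U(Y)(G/H) = Hom(G/H, Y) = Y^H`.  We
assert: `U` is full and faithful, it has a left adjoint `T` whose counit is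
an isomorphism, `T` sends the presheaf represented by `G/H` to `G/H`, and the
underlying set of `T(X)` is `X(G/e)`.
-/

open CategoryTheory Limits Opposite

universe u

/-- The `G`-set `S` as a functor `SingleObj G ⥤ Type u`. -/
def actFunctor (G : Type u) [Group G] (S : Type u) [MulAction G S] :
    SingleObj G ⥤ Type u where
  obj _ := S
  map g := TypeCat.ofHom (fun s => g • s)
  map_id := by intro x; ext s; exact one_smul _ _
  map_comp := by intro x y z f g; ext s; exact mul_smul _ _ _

namespace Stmt16

variable {G : Type u} [Group G]

lemma bot_rel_eq {a b : G} (h : (QuotientGroup.leftRel (⊥ : Subgroup G)) a b) : a = b := by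
  have := QuotientGroup.leftRel_apply.mp h
  rw [Subgroup.mem_bot] at this
  exact inv_mul_eq_one.mp this

/-- The free orbit `G ⧸ ⊥` as a `G`-functor. -/
abbrev freeOrbit (G : Type u) [Group G] : SingleObj G ⥤ Type u :=
  actFunctor G (G ⧸ (⊥ : Subgroup G))

/-- Applying `W.map` at the unique object, with objects pinned. -/
def fmap (W : SingleObj G ⥤ Type u) (a : G) :
    W.obj (SingleObj.star G) → W.obj (SingleObj.star G) :=
  W.map a

lemma fmap_one (W : SingleObj G ⥤ Type u) (s : W.obj (SingleObj.star G)) :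
    fmap W 1 s = s :=
  W.map_id_apply (SingleObj.star G) s

lemma fmap_mul (W : SingleObj G ⥤ Type u) (a b : G) (s : W.obj (SingleObj.star G)) :
    fmap W (a * b) s = fmap W a (fmap W b s) :=
  W.map_comp_apply (X := SingleObj.star G) (Y := SingleObj.star G)
    (Z := SingleObj.star G) b a s

lemma app_fmap {V W : SingleObj G ⥤ Type u} (η : V ⟶ W) (a : G)
    (s : V.obj (SingleObj.star G)) :
    η.app (SingleObj.star G) (fmap V a s) = fmap W a (η.app (SingleObj.star G) s) :=
  η.naturality_apply (X := SingleObj.star G) (Y := SingleObj.star G) a s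

lemma fmap_free (a b : G) :
    fmap (freeOrbit G) a (QuotientGroup.mk b : G ⧸ (⊥ : Subgroup G)) = QuotientGroup.mk (a * b) := rfl

/-- Right multiplication by `g` as an endomorphism of the free orbit. -/
def rmulHom (g : G) : freeOrbit G ⟶ freeOrbit G where
  app _ := TypeCat.ofHom (fun x => Quotient.map' (· * g)
    (fun a b h => by rw [bot_rel_eq h]) x)
  naturality x y h := by
    refine ConcreteCategory.hom_ext _ _ (fun q => ?_)
    induction q using Quotient.inductionOn' with
    | h a =>
      show (QuotientGroup.mk ((h * a) * g) : G ⧸ (⊥ : Subgroup G))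
        = QuotientGroup.mk (h * (a * g))
      rw [mul_assoc]

lemma rmulHom_mk (g a : G) :
    (rmulHom g).app (SingleObj.star G) (QuotientGroup.mk a : G ⧸ (⊥ : Subgroup G)) = QuotientGroup.mk (a * g) := rfl

lemma rmulHom_one : rmulHom (1 : G) = 𝟙 (freeOrbit G) := by
  apply NatTrans.ext; funext x; refine ConcreteCategory.hom_ext _ _ (fun q => ?_)
  induction q using Quotient.inductionOn' with
  | h a =>
    show (QuotientGroup.mk (a * 1) : G ⧸ (⊥ : Subgroup G)) = QuotientGroup.mk a
    rw [mul_one]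

lemma rmulHom_comp (g h : G) : rmulHom g ≫ rmulHom h = rmulHom (g * h) := by
  apply NatTrans.ext; funext x; refine ConcreteCategory.hom_ext _ _ (fun q => ?_)
  induction q using Quotient.inductionOn' with
  | h a =>
    show (QuotientGroup.mk ((a * g) * h) : G ⧸ (⊥ : Subgroup G))
      = QuotientGroup.mk (a * (g * h))
    rw [mul_assoc]

/-- The `G`-map out of the free orbit determined by an element of `Y`. -/
def orbitHom (W : SingleObj G ⥤ Type u) (s : W.obj (SingleObj.star G)) :
    freeOrbit G ⟶ W where
  app _ := TypeCat.ofHom (fun x => Quotient.liftOn' x (fun g => fmap W g s)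
    (fun a b h => by rw [bot_rel_eq h]))
  naturality x y h := by
    refine ConcreteCategory.hom_ext _ _ (fun q => ?_)
    induction q using Quotient.inductionOn' with
    | h a =>
      show fmap W (h * a) s = fmap W h (fmap W a s)
      exact fmap_mul W h a s

lemma orbitHom_mk (W : SingleObj G ⥤ Type u) (s : W.obj (SingleObj.star G)) (a : G) :
    (orbitHom W s).app (SingleObj.star G) (QuotientGroup.mk a : G ⧸ (⊥ : Subgroup G)) = fmap W a s := rfl

lemma orbitHom_one : orbitHom (freeOrbit G) (QuotientGroup.mk (1 : G) : G ⧸ (⊥ : Subgroup G)) = 𝟙 (freeOrbit G) := by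
  apply NatTrans.ext; funext x; refine ConcreteCategory.hom_ext _ _ (fun q => ?_)
  induction q using Quotient.inductionOn' with
  | h a =>
    show (QuotientGroup.mk (a * 1) : G ⧸ (⊥ : Subgroup G)) = QuotientGroup.mk a
    rw [mul_one]

lemma rmulHom_orbitHom (W : SingleObj G ⥤ Type u) (s : W.obj (SingleObj.star G)) (h : G) :
    rmulHom h ≫ orbitHom W s = orbitHom W (fmap W h s) := by
  apply NatTrans.ext; funext x; refine ConcreteCategory.hom_ext _ _ (fun q => ?_)
  induction q using Quotient.inductionOn' with
  | h a =>
    show fmap W (a * h) s = fmap W a (fmap W h s)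
    exact fmap_mul W a h s

lemma orbitHom_comp (V W : SingleObj G ⥤ Type u) (s : V.obj (SingleObj.star G)) (f : V ⟶ W) :
    orbitHom V s ≫ f = orbitHom W (f.app _ s) := by
  apply NatTrans.ext; funext x; refine ConcreteCategory.hom_ext _ _ (fun q => ?_)
  induction q using Quotient.inductionOn' with
  | h a =>
    show f.app _ (fmap V a s) = fmap W a (f.app _ s)
    exact app_fmap f a s

lemma orbitHom_eval (W : SingleObj G ⥤ Type u) (η : freeOrbit G ⟶ W) :
    orbitHom W (η.app _ (QuotientGroup.mk (1 : G) : G ⧸ (⊥ : Subgroup G))) = η := by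
  apply NatTrans.ext; funext x; refine ConcreteCategory.hom_ext _ _ (fun q => ?_)
  induction q using Quotient.inductionOn' with
  | h a =>
    show fmap W a (η.app _ (QuotientGroup.mk 1)) = η.app _ (QuotientGroup.mk a)
    exact (app_fmap η a (QuotientGroup.mk 1 : G ⧸ (⊥ : Subgroup G))).symm.trans
      (congrArg (fun q : (freeOrbit G).obj (SingleObj.star G) => η.app (SingleObj.star G) q)
        (show (QuotientGroup.mk (a * 1) : G ⧸ (⊥ : Subgroup G)) = QuotientGroup.mk a by rw [mul_one]))


variable (F : Set (Subgroup G))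

abbrev Porb : (SingleObj G ⥤ Type u) → Prop :=
  fun X => ∃ H ∈ F, X = actFunctor G (G ⧸ H)

abbrev Orb := ObjectProperty.FullSubcategory (Porb F)

variable (hbot : (⊥ : Subgroup G) ∈ F)

def E : Orb F := ⟨actFunctor G (G ⧸ (⊥ : Subgroup G)), ⟨⊥, hbot, rfl⟩⟩

def rmulE (g : G) : E F hbot ⟶ E F hbot := ObjectProperty.homMk (rmulHom g)

def toE (d : Orb F) (s : d.obj.obj (SingleObj.star G)) : E F hbot ⟶ d :=
  ObjectProperty.homMk (orbitHom d.obj s)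

def Ufun : (SingleObj G ⥤ Type u) ⥤ ((Orb F)ᵒᵖ ⥤ Type u) :=
  yoneda ⋙ (Functor.whiskeringLeft _ _ _).obj (ObjectProperty.ι (Porb F)).op

def Tfun : ((Orb F)ᵒᵖ ⥤ Type u) ⥤ (SingleObj G ⥤ Type u) where
  obj X :=
    { obj := fun _ => X.obj (op (E F hbot))
      map := fun g => X.map (rmulE F hbot g).op
      map_id := by
        intro x
        have h1 : rmulE F hbot (1 : G) = 𝟙 (E F hbot) := ObjectProperty.hom_ext _ rmulHom_one
        show X.map (rmulE F hbot (1 : G)).op = _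
        rw [h1, op_id, X.map_id]
      map_comp := by
        intro x y z f g
        have h2 : rmulE F hbot g ≫ rmulE F hbot f = rmulE F hbot (g * f) :=
          ObjectProperty.hom_ext _ (rmulHom_comp g f)
        show X.map (rmulE F hbot (g * f)).op = _
        rw [← h2, op_comp, X.map_comp] }
  map {X X'} f :=
    { app := fun _ => f.app (op (E F hbot))
      naturality := by
        intro x y g
        refine ConcreteCategory.hom_ext _ _ (fun ξ => ?_)
        exact f.naturality_apply (rmulE F hbot g).op ξ }
  map_id := by intro X; apply NatTrans.ext; funext x; rfl
  map_comp := by intro X Y Z f g; apply NatTrans.ext; funext x; rfl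

/-- The component of the unit. -/
def nuApp (X : (Orb F)ᵒᵖ ⥤ Type u) (d : Orb F) (x : X.obj (op d)) :
    (ObjectProperty.ι (Porb F)).obj d ⟶ (Tfun F hbot).obj X where
  app _ := TypeCat.ofHom (fun s => X.map (toE F hbot d s).op x)
  naturality := by
    intro a b g
    refine ConcreteCategory.hom_ext _ _ (fun s => ?_)
    have h2 : rmulE F hbot g ≫ toE F hbot d s = toE F hbot d (fmap d.obj g s) :=
      ObjectProperty.hom_ext _ (rmulHom_orbitHom d.obj s g)
    show X.map (toE F hbot d (fmap d.obj g s)).op x = _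
    rw [← h2, op_comp, X.map_comp]
    rfl

def unitT : 𝟭 ((Orb F)ᵒᵖ ⥤ Type u) ⟶ Tfun F hbot ⋙ Ufun F where
  app X :=
    { app := fun dop => TypeCat.ofHom (fun x => nuApp F hbot X dop.unop x)
      naturality := by
        intro a b g
        refine ConcreteCategory.hom_ext _ _ (fun x => ?_)
        apply NatTrans.ext
        funext w
        refine ConcreteCategory.hom_ext _ _ (fun s => ?_)
        have h3 : toE F hbot b.unop s ≫ g.unop = toE F hbot a.unop (g.unop.hom.app _ s) :=
          ObjectProperty.hom_ext _ (orbitHom_comp _ _ s g.unop.hom)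
        show X.map (toE F hbot b.unop s).op (X.map g x)
          = X.map (toE F hbot a.unop (g.unop.hom.app _ s)).op x
        rw [← h3, op_comp, X.map_comp]
        rfl }
  naturality := by
    intro X X' f
    apply NatTrans.ext
    funext dop
    refine ConcreteCategory.hom_ext _ _ (fun x => ?_)
    apply NatTrans.ext
    funext w
    refine ConcreteCategory.hom_ext _ _ (fun s => ?_)
    exact (f.naturality_apply (toE F hbot dop.unop s).op x).symm

def counitT : Ufun F ⋙ Tfun F hbot ⟶ 𝟭 (SingleObj G ⥤ Type u) where
  app Y :=
    { app := fun _ => TypeCat.ofHom (fun η => η.app (SingleObj.star G)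
        (QuotientGroup.mk (1 : G) : G ⧸ (⊥ : Subgroup G)))
      naturality := by
        intro x y g
        refine ConcreteCategory.hom_ext _ _ (fun η => ?_)
        show η.app (SingleObj.star G)
            ((rmulHom g).app (SingleObj.star G) (QuotientGroup.mk (1 : G) : G ⧸ (⊥ : Subgroup G)))
          = fmap Y g (η.app (SingleObj.star G) (QuotientGroup.mk (1 : G) : G ⧸ (⊥ : Subgroup G)))
        refine Eq.trans ?_ (app_fmap (V := freeOrbit G) (W := Y) η g _)
        show η.app (SingleObj.star G) (QuotientGroup.mk (1 * g) : G ⧸ (⊥ : Subgroup G))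
          = η.app (SingleObj.star G) (QuotientGroup.mk (g * 1) : G ⧸ (⊥ : Subgroup G))
        rw [one_mul, mul_one] }
  naturality := by
    intro Y Y' f
    apply NatTrans.ext
    funext x
    refine ConcreteCategory.hom_ext _ _ (fun η => ?_)
    rfl

def counitInvT : 𝟭 (SingleObj G ⥤ Type u) ⟶ Ufun F ⋙ Tfun F hbot where
  app Y :=
    { app := fun _ => TypeCat.ofHom (fun s => (orbitHom Y s :
        (ObjectProperty.ι (Porb F)).obj (E F hbot) ⟶ Y))
      naturality := by
        intro x y g
        refine ConcreteCategory.hom_ext _ _ (fun s => ?_)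
        exact (rmulHom_orbitHom Y s g).symm }
  naturality := by
    intro Y Y' f
    apply NatTrans.ext
    funext x
    refine ConcreteCategory.hom_ext _ _ (fun s => ?_)
    exact (orbitHom_comp Y Y' s f).symm

def adjT : Tfun F hbot ⊣ Ufun F :=
  Adjunction.mkOfUnitCounit
    { unit := unitT F hbot
      counit := counitT F hbot
      left_triangle := by
        apply NatTrans.ext
        funext X
        apply NatTrans.ext
        funext x
        refine ConcreteCategory.hom_ext _ _ (fun ξ => ?_)
        have h4 : toE F hbot (E F hbot) (QuotientGroup.mk (1 : G) : G ⧸ (⊥ : Subgroup G)) = 𝟙 (E F hbot) :=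
          ObjectProperty.hom_ext _ orbitHom_one
        show X.map (toE F hbot (E F hbot) (QuotientGroup.mk (1 : G) : G ⧸ (⊥ : Subgroup G))).op ξ = ξ
        rw [h4, op_id, X.map_id]
        rfl
      right_triangle := by
        apply NatTrans.ext
        funext Y
        apply NatTrans.ext
        funext dop
        refine ConcreteCategory.hom_ext _ _ (fun η => ?_)
        apply NatTrans.ext
        funext w
        refine ConcreteCategory.hom_ext _ _ (fun s => ?_)
        show η.app (SingleObj.star G) (fmap dop.unop.obj 1 s) = η.app (SingleObj.star G) s
        rw [fmap_one] }

lemma counit_isIso : IsIso (adjT F hbot).counit := by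
  refine ⟨counitInvT F hbot, ?_, ?_⟩
  · apply NatTrans.ext
    funext Y
    apply NatTrans.ext
    funext x
    refine ConcreteCategory.hom_ext _ _ (fun η => ?_)
    exact orbitHom_eval Y η
  · apply NatTrans.ext
    funext Y
    apply NatTrans.ext
    funext x
    refine ConcreteCategory.hom_ext _ _ (fun s => ?_)
    show fmap Y 1 s = s
    exact fmap_one Y s

end Stmt16

theorem stmt16 (G : Type u) [Group G] (F : Set (Subgroup G))
    (hbot : (⊥ : Subgroup G) ∈ F)
    (hle : ∀ H ∈ F, ∀ K : Subgroup G, K ≤ H → K ∈ F)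
    (hconj : ∀ H ∈ F, ∀ g : G,
      Subgroup.map (MulAut.conj g).toMonoidHom H ∈ F) :
    letI P : (SingleObj G ⥤ Type u) → Prop :=
      fun X => ∃ H ∈ F, X = actFunctor G (G ⧸ H)
    letI U : (SingleObj G ⥤ Type u) ⥤ ((ObjectProperty.FullSubcategory P)ᵒᵖ ⥤ Type u) :=
      yoneda ⋙ (Functor.whiskeringLeft _ _ _).obj (ObjectProperty.ι P).op
    Nonempty U.Full ∧ Nonempty U.Faithful ∧
    ∃ (T : ((ObjectProperty.FullSubcategory P)ᵒᵖ ⥤ Type u) ⥤ (SingleObj G ⥤ Type u))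
      (adj : T ⊣ U),
      IsIso adj.counit ∧
      (∀ d : ObjectProperty.FullSubcategory P, Nonempty (T.obj (U.obj d.obj) ≅ d.obj)) ∧
      (∀ X : (ObjectProperty.FullSubcategory P)ᵒᵖ ⥤ Type u,
        Nonempty ((T.obj X).obj (SingleObj.star G)
          ≅ X.obj (op ⟨actFunctor G (G ⧸ (⊥ : Subgroup G)), ⊥, hbot, rfl⟩))) := by
  haveI hIso : IsIso (Stmt16.adjT F hbot).counit := Stmt16.counit_isIso F hbot
  have ff : (Stmt16.Ufun F).FullyFaithful :=
    (Stmt16.adjT F hbot).fullyFaithfulROfIsIsoCounit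
  refine ⟨⟨ff.full⟩, ⟨ff.faithful⟩, Stmt16.Tfun F hbot, Stmt16.adjT F hbot, hIso,
    fun d => ⟨(asIso (Stmt16.adjT F hbot).counit).app d.obj⟩, fun X => ⟨Iso.refl _⟩⟩
end

section
/- Let G be a topological group. For any G-space Y, any closed subgroup H ≤ G, and any space V with trivial G-action, the natural map Y^H × V → (Y × V)^H is a homeomorphism. Consequently the unit η: X → UTX of the orbit-presheaf adjunction is an isomorphism for every cell complex X built from the generating cofibrations F_{G/H} × i (H ∈ F, i a cell inclusion S^{n-1} → D^n), since U preserves the colimits used in constructing cell complexes and η is an isomorphism on generators. -/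
/-!
STATEMENT 17: Let `G` be a topological group.  For any `G`-space `Y`, any
closed subgroup `H ≤ G`, and any space `V` with trivial `G`-action, the
natural map `Y^H × V → (Y × V)^H` is a homeomorphism.  (Consequently the unit
`η : X → UTX` of the orbit-presheaf adjunction is an isomorphism for every
cell complex `X` built from the generating cofibrations; we formalize the
topological content, i.e. the displayed natural homeomorphism.)

Fixed points are taken as subspaces; `G` acts on `Y × V` by `g • (y,v) = (g•y, v)`.
-/

theorem stmt17 (G : Type*) [Group G] [TopologicalSpace G] [IsTopologicalGroup G]
    (H : Subgroup G) (hH : IsClosed (H : Set G))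
    (Y : Type*) [TopologicalSpace Y] [MulAction G Y] [ContinuousSMul G Y]
    (V : Type*) [TopologicalSpace V] :
    IsHomeomorph (fun q : {y : Y // ∀ h : H, (h : G) • y = y} × V =>
      (⟨(q.1.val, q.2), fun h => by
          show ((h : G) • q.1.val, q.2) = (q.1.val, q.2)
          rw [q.1.property h]⟩ :
        {p : Y × V // ∀ h : H, ((h : G) • p.1, p.2) = p})) := by
  rw [isHomeomorph_iff_exists_inverse]
  refine ⟨?_, fun p => (⟨⟨p.val.1, fun h => congrArg Prod.fst (p.property h)⟩, p.val.2⟩), fun q => rfl, fun p => rfl, ?_⟩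
  · exact Continuous.subtype_mk (by fun_prop) _
  · exact Continuous.prodMk (Continuous.subtype_mk (by fun_prop) _) (by fun_prop)
end

section
/- Every relative cell complex built from the generating acyclic cofibrations J_F = {G/H × j : H ∈ F, j ∈ J}, where J consists of the inclusions i_0: D^n → D^n × I, is the inclusion of a G-deformation retract; in particular its H-fixed point map is a homotopy equivalence for every H ∈ F, so the acyclicity condition for the F-model structure on G-spaces holds. -/
/-!
STATEMENT 18: Every relative cell complex built from the generating acyclic
cofibrations `J_F = {G/H × j : H ∈ F, j ∈ J}`, where `J` consists of the
inclusions `i₀ : Dⁿ → Dⁿ × I`, is the inclusion of a `G`-deformation retract.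

Formalization: `G`-spaces are functors `SingleObj G ⥤ TopCat` for a
topological group `G`.  For a subgroup `H` and `n : ℕ`, `genMap H n` is the
`G`-map `G/H × Dⁿ → G/H × (Dⁿ × I)` (action on the orbit factor only, `Dⁿ`
the closed unit ball of `ℝⁿ`, `I` the unit interval).  `CellIncl F` is the
inductively defined class of relative `J_F`-cell complexes: it contains the
generators for `H ∈ F` and is closed under coproducts, pushouts (cobase
change), and sequential (countable transfinite) composites, encoded by
colimit cocones.  `IsGDefRetractIncl i` says that there are an equivariant
retraction `r` and an equivariant homotopy rel `A` from the identity of `X`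
to `i ∘ r`.  The theorem: every map in `CellIncl F` is the inclusion of a
`G`-deformation retract.
-/

open CategoryTheory Limits

noncomputable section

variable (G : Type) [Group G] [TopologicalSpace G] [IsTopologicalGroup G]

abbrev GTop := SingleObj G ⥤ TopCat.{0}

/-- The closed unit disk `Dⁿ ⊆ ℝⁿ`. -/
abbrev disk (n : ℕ) : Type := Metric.closedBall (0 : EuclideanSpace ℝ (Fin n)) 1

variable {G}

/-- The `G`-space `G/H × A` for a space `A` with trivial action. -/
def orbProd (H : Subgroup G) (A : Type) [TopologicalSpace A] : GTop G where
  obj _ := TopCat.of ((G ⧸ H) × A)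
  map g := show TopCat.of ((G ⧸ H) × A) ⟶ TopCat.of ((G ⧸ H) × A) from
    TopCat.ofHom ⟨fun p => (g • p.1, p.2),
      (((continuous_const_smul (g : G)).comp continuous_fst).prodMk continuous_snd)⟩
  map_id := by
    intro x
    apply TopCat.hom_ext
    apply ContinuousMap.ext
    rintro ⟨q, a⟩
    show ((1 : G) • q, a) = (q, a)
    rw [one_smul]
  map_comp := by
    intro x y z f g
    apply TopCat.hom_ext
    apply ContinuousMap.ext
    rintro ⟨q, a⟩
    show ((g * f : G) • q, a) = (g • f • q, a)
    rw [mul_smul]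

/-- The generating map `G/H × Dⁿ → G/H × (Dⁿ × I)`, `(x, d) ↦ (x, (d, 0))`. -/
def genMap (H : Subgroup G) (n : ℕ) :
    orbProd H (disk n) ⟶ orbProd H (disk n × unitInterval) where
  app _ := show TopCat.of ((G ⧸ H) × disk n) ⟶ TopCat.of ((G ⧸ H) × (disk n × unitInterval))
    from TopCat.ofHom ⟨fun p => (p.1, (p.2, 0)),
      (continuous_fst.prodMk (continuous_snd.prodMk continuous_const))⟩
  naturality := by
    intro x y g
    apply TopCat.hom_ext
    apply ContinuousMap.ext
    rintro ⟨q, a⟩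
    rfl

/-- The class of relative `J_F`-cell complexes: generated by the maps
`genMap H n` (`H ∈ F`) under coproducts, pushouts and sequential composites. -/
inductive CellIncl (F : Set (Subgroup G)) : MorphismProperty (GTop G)
  | gen (H : Subgroup G) (hH : H ∈ F) (n : ℕ) : CellIncl F (genMap H n)
  | coprod {ι : Type} {A B : ι → GTop G} (f : ∀ i, A i ⟶ B i)
      (hf : ∀ i, CellIncl F (f i))
      (cA : Cofan A) (hA : IsColimit cA) (cB : Cofan B) (hB : IsColimit cB)
      (φ : cA.pt ⟶ cB.pt) (hφ : ∀ i, cA.inj i ≫ φ = f i ≫ cB.inj i) :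
      CellIncl F φ
  | pushout {A B A' B' : GTop G} {f : A ⟶ B} {f' : A' ⟶ B'}
      (s : A ⟶ A') (t : B ⟶ B') (hf : CellIncl F f) (h : IsPushout s f f' t) :
      CellIncl F f'
  | seq (S : ℕ ⥤ GTop G)
      (hS : ∀ n : ℕ, CellIncl F (S.map (homOfLE (Nat.le_succ n))))
      (c : Cocone S) (hc : IsColimit c) : CellIncl F (c.ι.app 0)

/-- `i : A ⟶ X` is the inclusion of a `G`-deformation retract: there are an
equivariant retraction `r : X → A` and an equivariant homotopy rel `A` from
the identity of `X` to `i ∘ r`. -/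
def IsGDefRetractIncl {A X : GTop G} (i : A ⟶ X) : Prop :=
  ∃ (r : C(X.obj (SingleObj.star G), A.obj (SingleObj.star G)))
    (h : C(X.obj (SingleObj.star G) × unitInterval, X.obj (SingleObj.star G))),
    (∀ (g : G) (x : X.obj (SingleObj.star G)), r (X.map g x) = A.map g (r x)) ∧
    (∀ a : A.obj (SingleObj.star G), r (i.app (SingleObj.star G) a) = a) ∧
    (∀ (g : G) (x : X.obj (SingleObj.star G)) (t : unitInterval),
      h (X.map g x, t) = X.map g (h (x, t))) ∧
    (∀ x, h (x, 0) = x) ∧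
    (∀ x, h (x, 1) = i.app (SingleObj.star G) (r x)) ∧
    (∀ (a : A.obj (SingleObj.star G)) (t : unitInterval),
      h (i.app (SingleObj.star G) a, t) = i.app (SingleObj.star G) a)

set_option linter.unusedSectionVars false

namespace Stmt18Aux

instance : ContinuousMul unitInterval :=
  ⟨((continuous_subtype_val.comp continuous_fst).mul
      (continuous_subtype_val.comp continuous_snd)).subtype_mk _⟩

/-- Underlying space of a `G`-space. -/
abbrev U (X : GTop G) : TopCat.{0} := X.obj (SingleObj.star G)

/-- Build a `G`-map from an equivariant continuous map. -/
def mkHom {X Y : GTop G} (φ : C(U X, U Y))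
    (hφ : ∀ (g : G) (x : U X), φ (X.map g x) = Y.map g (φ x)) : X ⟶ Y where
  app _ := TopCat.ofHom φ
  naturality _ _ g := TopCat.hom_ext (ContinuousMap.ext fun x => hφ g x)

lemma equivar {X Y : GTop G} (f : X ⟶ Y) (g : G) (x : U X) :
    f.app (SingleObj.star G) (X.map g x) = Y.map g (f.app (SingleObj.star G) x) :=
  ConcreteCategory.congr_hom (f.naturality (show SingleObj.star G ⟶ SingleObj.star G from g)) x

lemma hom_ext' {X Y : GTop G} {f g : X ⟶ Y}
    (h : ∀ x : U X, f.app (SingleObj.star G) x = g.app (SingleObj.star G) x) : f = g := by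
  apply NatTrans.ext; funext j; exact TopCat.hom_ext (ContinuousMap.ext h)

lemma congr_app {X Y : GTop G} {f g : X ⟶ Y} (h : f = g) (x : U X) :
    f.app (SingleObj.star G) x = g.app (SingleObj.star G) x := by rw [h]

@[simp] lemma comp_app' {X Y Z : GTop G} (f : X ⟶ Y) (g : Y ⟶ Z) (x : U X) :
    (f ≫ g).app (SingleObj.star G) x
      = g.app (SingleObj.star G) (f.app (SingleObj.star G) x) := rfl

@[simp] lemma id_app' (X : GTop G) (x : U X) : (𝟙 X : X ⟶ X).app (SingleObj.star G) x = x := rfl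

@[simp] lemma mkHom_app {X Y : GTop G} (φ : C(U X, U Y)) (hφ) (x : U X) :
    (mkHom φ hφ).app (SingleObj.star G) x = φ x := rfl

/-- The path object `Xᴵ` with pointwise action. -/
def P (X : GTop G) : GTop G where
  obj _ := TopCat.of C(unitInterval, U X)
  map g := TopCat.ofHom (⟨fun p => (X.map g).hom.comp p, ContinuousMap.continuous_postcomp _⟩ :
    C(C(unitInterval, U X), C(unitInterval, U X)))
  map_id := by
    intro x
    refine TopCat.hom_ext (ContinuousMap.ext fun p => ?_)
    show (X.map (𝟙 x)).hom.comp p = p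
    rw [X.map_id x]
    rfl
  map_comp := by
    intro x y z f g
    refine TopCat.hom_ext (ContinuousMap.ext fun p => ?_)
    show (X.map (f ≫ g)).hom.comp p
      = (X.map g).hom.comp ((X.map f).hom.comp p)
    rw [X.map_comp f g]
    rfl

/-- Reinterpret a point of the path object as a continuous path. -/
def toPath {X : GTop G} (p : U (P X)) : C(unitInterval, U X) := p

/-- Reinterpret a continuous path as a point of the path object. -/
def ofPath {X : GTop G} (p : C(unitInterval, U X)) : U (P X) := p

@[simp] lemma toPath_ofPath {X : GTop G} (p : C(unitInterval, U X)) : toPath (ofPath p) = p := rfl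

@[simp] lemma P_map_apply (X : GTop G) (g : G) (p : U (P X)) (t : unitInterval) :
    toPath ((P X).map g p) t = X.map g (toPath p t) := rfl

/-- Evaluation at time `t`. -/
def ev (t : unitInterval) (X : GTop G) : P X ⟶ X :=
  mkHom (⟨fun p => toPath p t,
      (continuous_eval_const t : Continuous fun p : C(unitInterval, U X) => p t)⟩ :
      C(U (P X), U X))
    (fun g p => rfl)

/-- Constant paths. -/
def cst (X : GTop G) : X ⟶ P X :=
  mkHom (⟨fun x => ofPath (ContinuousMap.const _ x),
      (ContinuousMap.continuous_const' :
        Continuous fun x : U X => (ContinuousMap.const unitInterval x : C(unitInterval, U X)))⟩ :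
      C(U X, U (P X)))
    (fun g x => ContinuousMap.ext fun t => rfl)

/-- Functoriality of the path object. -/
def Pmap {X Y : GTop G} (f : X ⟶ Y) : P X ⟶ P Y :=
  mkHom (⟨fun p => ofPath ((f.app (SingleObj.star G)).hom.comp (toPath p)),
      (ContinuousMap.continuous_postcomp _ :
        Continuous fun p : C(unitInterval, U X) =>
          (f.app (SingleObj.star G)).hom.comp p)⟩ : C(U (P X), U (P Y)))
    (fun g p => ContinuousMap.ext fun t => equivar f g (toPath p t))

@[simp] lemma ev_app (t : unitInterval) (X : GTop G) (p : U (P X)) :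
    (ev t X).app (SingleObj.star G) p = toPath p t := rfl

@[simp] lemma cst_app (X : GTop G) (x : U X) (t : unitInterval) :
    toPath ((cst X).app (SingleObj.star G) x) t = x := rfl

@[simp] lemma Pmap_app {X Y : GTop G} (f : X ⟶ Y) (p : U (P X)) (t : unitInterval) :
    toPath ((Pmap f).app (SingleObj.star G) p) t
      = f.app (SingleObj.star G) (toPath p t) := rfl

lemma Pmap_ev {X Y : GTop G} (f : X ⟶ Y) (t : unitInterval) :
    Pmap f ≫ ev t Y = ev t X ≫ f := hom_ext' fun p => rfl

lemma cst_Pmap {X Y : GTop G} (f : X ⟶ Y) :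
    cst X ≫ Pmap f = f ≫ cst Y := hom_ext' fun x => ContinuousMap.ext fun t => rfl

lemma cst_ev (t : unitInterval) (X : GTop G) : cst X ≫ ev t X = 𝟙 X :=
  hom_ext' fun x => rfl

/-- Morphism-level formulation of being the inclusion of a `G`-deformation retract. -/
def DefR {A X : GTop G} (i : A ⟶ X) : Prop :=
  ∃ (r : X ⟶ A) (h : X ⟶ P X),
    i ≫ r = 𝟙 A ∧ h ≫ ev 0 X = 𝟙 X ∧ h ≫ ev 1 X = r ≫ i ∧ i ≫ h = i ≫ cst X

/-- Build a homotopy morphism from an equivariant continuous homotopy. -/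
def mkH {X : GTop G} (H : C(U X × unitInterval, U X))
    (hH : ∀ (g : G) (y : U X) (t : unitInterval), H (X.map g y, t) = X.map g (H (y, t))) :
    X ⟶ P X :=
  mkHom (show C(U X, U (P X)) from H.curry) (fun g y => ContinuousMap.ext fun t => hH g y t)

@[simp] lemma mkH_app {X : GTop G} (H : C(U X × unitInterval, U X)) (hH) (y : U X)
    (t : unitInterval) : toPath ((mkH H hH).app (SingleObj.star G) y) t = H (y, t) := rfl

lemma defR_iff {A X : GTop G} (i : A ⟶ X) (h : DefR i) : IsGDefRetractIncl i := by
  obtain ⟨r, h, hretr, h0, h1, hrel⟩ := h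
  refine ⟨(r.app _).hom,
    ContinuousMap.uncurry
      (show C(U X, C(unitInterval, U X)) from
        ⟨fun x => toPath (h.app (SingleObj.star G) x),
          (h.app (SingleObj.star G)).hom.continuous⟩), ?_, ?_, ?_, ?_, ?_, ?_⟩
  · exact fun g x => equivar r g x
  · exact fun a => congr_app hretr a
  · intro g x t
    show toPath (h.app _ (X.map g x)) t = X.map g (toPath (h.app _ x) t)
    rw [equivar h g x]
    rfl
  · exact fun x => congr_app h0 x
  · exact fun x => congr_app h1 x
  · intro a t
    show toPath (h.app _ (i.app _ a)) t = i.app _ a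
    have := congr_app hrel a
    simp only [comp_app'] at this
    rw [this]
    rfl

end Stmt18Aux
namespace Stmt18Aux

lemma defR_gen (H : Subgroup G) (n : ℕ) : DefR (genMap H n) := by
  refine ⟨mkHom ((⟨fun p => (p.1, p.2.1),
        continuous_fst.prodMk (continuous_fst.comp continuous_snd)⟩ :
        C((G ⧸ H) × (disk n × unitInterval), (G ⧸ H) × disk n)) :
        C(U (orbProd H (disk n × unitInterval)), U (orbProd H (disk n))))
      (fun g p => rfl),
    mkH ((⟨fun q => (q.1.1, (q.1.2.1, unitInterval.symm q.2 * q.1.2.2)),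
        (continuous_fst.comp continuous_fst).prodMk
          ((continuous_fst.comp (continuous_snd.comp continuous_fst)).prodMk
            ((unitInterval.continuous_symm.comp continuous_snd).mul
              (continuous_snd.comp (continuous_snd.comp continuous_fst))))⟩ :
        C(((G ⧸ H) × (disk n × unitInterval)) × unitInterval,
          (G ⧸ H) × (disk n × unitInterval))) :
        C(U (orbProd H (disk n × unitInterval)) × unitInterval,
          U (orbProd H (disk n × unitInterval))))
      (fun g y t => rfl), ?_, ?_, ?_, ?_⟩
  · exact hom_ext' fun p => rfl
  · refine hom_ext' fun p => ?_
    show ((p.1, (p.2.1, unitInterval.symm 0 * p.2.2)) : (G ⧸ H) × (disk n × unitInterval)) = p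
    rw [unitInterval.symm_zero, one_mul]
    rfl
  · refine hom_ext' fun p => ?_
    show ((p.1, (p.2.1, unitInterval.symm 1 * p.2.2)) : (G ⧸ H) × (disk n × unitInterval))
      = (p.1, (p.2.1, 0))
    rw [unitInterval.symm_one, zero_mul]
  · refine hom_ext' fun a => ?_
    refine ContinuousMap.ext fun t => ?_
    show ((a.1, (a.2, unitInterval.symm t * 0)) : (G ⧸ H) × (disk n × unitInterval))
      = ((a.1, (a.2, 0)) : (G ⧸ H) × (disk n × unitInterval))
    rw [mul_zero]

end Stmt18Aux
namespace Stmt18Aux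

lemma defR_coprod {ι : Type} {A B : ι → GTop G} (f : ∀ i, A i ⟶ B i)
    (hf : ∀ i, DefR (f i))
    (cA : Cofan A) (hA : IsColimit cA) (cB : Cofan B) (hB : IsColimit cB)
    (φ : cA.pt ⟶ cB.pt) (hφ : ∀ i, cA.inj i ≫ φ = f i ≫ cB.inj i) : DefR φ := by
  choose r h hr h0 h1 hrel using hf
  set r' : cB.pt ⟶ cA.pt := hB.desc (Cofan.mk cA.pt fun i => r i ≫ cA.inj i) with hr'def
  set h' : cB.pt ⟶ P cB.pt :=
    hB.desc (Cofan.mk (P cB.pt) fun i => h i ≫ Pmap (cB.inj i)) with hh'def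
  have facr : ∀ i, cB.inj i ≫ r' = r i ≫ cA.inj i := fun i => hB.fac _ ⟨i⟩
  have fach : ∀ i, cB.inj i ≫ h' = h i ≫ Pmap (cB.inj i) := fun i => hB.fac _ ⟨i⟩
  refine ⟨r', h', ?_, ?_, ?_, ?_⟩
  · refine hA.hom_ext fun ⟨i⟩ => ?_
    show cA.inj i ≫ φ ≫ r' = cA.inj i ≫ 𝟙 _
    rw [Category.comp_id, ← Category.assoc, hφ i, Category.assoc, facr i,
      ← Category.assoc, hr i, Category.id_comp]
  · refine hB.hom_ext fun ⟨i⟩ => ?_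
    show cB.inj i ≫ h' ≫ ev 0 cB.pt = cB.inj i ≫ 𝟙 _
    rw [Category.comp_id, ← Category.assoc, fach i, Category.assoc, Pmap_ev,
      ← Category.assoc, h0 i, Category.id_comp]
  · refine hB.hom_ext fun ⟨i⟩ => ?_
    show cB.inj i ≫ h' ≫ ev 1 cB.pt = cB.inj i ≫ r' ≫ φ
    rw [← Category.assoc, fach i, Category.assoc, Pmap_ev, ← Category.assoc, h1 i,
      ← Category.assoc, facr i, Category.assoc, Category.assoc, hφ i, ← Category.assoc]
  · refine hA.hom_ext fun ⟨i⟩ => ?_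
    show cA.inj i ≫ φ ≫ h' = cA.inj i ≫ φ ≫ cst cB.pt
    rw [← Category.assoc, hφ i, Category.assoc, fach i, ← Category.assoc, hrel i,
      Category.assoc, cst_Pmap, ← Category.assoc, ← hφ i, Category.assoc]

lemma defR_pushout {A B A' B' : GTop G} {f : A ⟶ B} {f' : A' ⟶ B'}
    (s : A ⟶ A') (t : B ⟶ B') (hf : DefR f) (hpo : IsPushout s f f' t) : DefR f' := by
  obtain ⟨r, h, hr, h0, h1, hrel⟩ := hf
  have wr : s ≫ 𝟙 A' = f ≫ r ≫ s := by
    rw [Category.comp_id, ← Category.assoc, hr, Category.id_comp]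
  have wh : s ≫ f' ≫ cst B' = f ≫ h ≫ Pmap t := by
    rw [← Category.assoc, hpo.w, Category.assoc, ← cst_Pmap, ← Category.assoc, ← hrel,
      Category.assoc]
  refine ⟨hpo.desc (𝟙 A') (r ≫ s) wr, hpo.desc (f' ≫ cst B') (h ≫ Pmap t) wh, ?_, ?_, ?_, ?_⟩
  · exact hpo.inl_desc _ _ _
  · refine hpo.hom_ext ?_ ?_
    · rw [← Category.assoc, hpo.inl_desc, Category.assoc, cst_ev, Category.comp_id]
    · rw [← Category.assoc, hpo.inr_desc, Category.assoc, Pmap_ev, ← Category.assoc, h0,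
        Category.id_comp, Category.comp_id]
  · refine hpo.hom_ext ?_ ?_
    · rw [← Category.assoc, hpo.inl_desc, Category.assoc, cst_ev, Category.comp_id,
        ← Category.assoc, hpo.inl_desc, Category.id_comp]
    · rw [← Category.assoc, hpo.inr_desc, Category.assoc, Pmap_ev, ← Category.assoc, h1,
        Category.assoc, ← hpo.w, ← Category.assoc, ← Category.assoc t, hpo.inr_desc]
  · exact hpo.inl_desc _ _ _

end Stmt18Aux
namespace Stmt18Aux

/-- Uncurried homotopy underlying a morphism to the path object. -/
def unc {X : GTop G} (k : X ⟶ P X) : C(U X × unitInterval, U X) :=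
  ContinuousMap.uncurry
    (show C(U X, C(unitInterval, U X)) from
      ⟨fun x => toPath (k.app (SingleObj.star G) x), (k.app (SingleObj.star G)).hom.continuous⟩)

@[simp] lemma unc_apply {X : GTop G} (k : X ⟶ P X) (x : U X) (t : unitInterval) :
    unc k (x, t) = toPath (k.app (SingleObj.star G) x) t := rfl

/-- The clock rescaling `[2⁻ⁿ⁻¹, 2⁻ⁿ] → [0,1]`. -/
def clip (n : ℕ) : C(unitInterval, unitInterval) :=
  ⟨fun t => Set.projIcc (0:ℝ) 1 zero_le_one (2 ^ (n+1) * (t:ℝ) - 1),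
    continuous_projIcc.comp
      ((continuous_const.mul continuous_subtype_val).sub continuous_const)⟩

lemma two_halfpow (n : ℕ) : (2:ℝ) ^ (n+1) * (1/2:ℝ) ^ (n+1) = 1 := by
  rw [← mul_pow]; norm_num

lemma clip_of_le {n : ℕ} {t : unitInterval} (ht : (t:ℝ) ≤ (1/2:ℝ) ^ (n+1)) :
    clip n t = 0 := by
  have h1 : (2:ℝ) ^ (n+1) * (t:ℝ) - 1 ≤ 0 := by
    have h2 := mul_le_mul_of_nonneg_left ht (by positivity : (0:ℝ) ≤ 2 ^ (n+1))
    rw [two_halfpow n] at h2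
    linarith
  show Set.projIcc (0:ℝ) 1 zero_le_one (2 ^ (n+1) * (t:ℝ) - 1) = 0
  rw [Set.projIcc_of_le_left zero_le_one h1]
  rfl

lemma clip_of_ge {n : ℕ} {t : unitInterval} (ht : (1/2:ℝ) ^ n ≤ (t:ℝ)) :
    clip n t = 1 := by
  have h2 : (2:ℝ) ^ (n+1) * (1/2:ℝ) ^ n = 2 := by
    rw [pow_succ, show (2:ℝ)^n * 2 * (1/2:ℝ)^n = ((2:ℝ)*(1/2:ℝ))^n * 2 by rw [mul_pow]; ring]
    norm_num
  have h1 : (1:ℝ) ≤ (2:ℝ) ^ (n+1) * (t:ℝ) - 1 := by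
    have h3 := mul_le_mul_of_nonneg_left ht (by positivity : (0:ℝ) ≤ 2 ^ (n+1))
    rw [h2] at h3
    linarith
  show Set.projIcc (0:ℝ) 1 zero_le_one (2 ^ (n+1) * (t:ℝ) - 1) = 1
  rw [Set.projIcc_of_right_le zero_le_one h1]
  rfl

lemma halfpow_succ_le (n : ℕ) : (1/2:ℝ) ^ (n+1) ≤ (1/2:ℝ) ^ n :=
  pow_le_pow_of_le_one (by norm_num) (by norm_num) (Nat.le_succ n)

section Seq

variable (S : ℕ ⥤ GTop G) (r : ∀ n : ℕ, S.obj (n + 1) ⟶ S.obj n)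
  (h : ∀ n : ℕ, S.obj (n + 1) ⟶ P (S.obj (n + 1)))

/-- Iterated retraction to the bottom stage. -/
def seqR : ∀ n : ℕ, (S.obj n ⟶ S.obj 0)
  | 0 => 𝟙 _
  | n + 1 => r n ≫ seqR n

variable (hr : ∀ n, S.map (homOfLE (Nat.le_succ n)) ≫ r n = 𝟙 _)
  (hh0 : ∀ n, h n ≫ ev 0 _ = 𝟙 _)
  (hh1 : ∀ n, h n ≫ ev 1 _ = r n ≫ S.map (homOfLE (Nat.le_succ n)))

/-- The telescoping homotopy at each finite stage, bundled with its key properties: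
identity for times `≤ 2⁻ⁿ`, equivariant, and equal to the iterated retraction
followed by the inclusion at time `1`. -/
def seqH :
    ∀ n : ℕ,
      {H : C(U (S.obj n) × unitInterval, U (S.obj n)) //
        (∀ (y : U (S.obj n)) (t : unitInterval), (t : ℝ) ≤ (1/2 : ℝ) ^ n → H (y, t) = y) ∧
        (∀ (g : G) (y : U (S.obj n)) (t : unitInterval),
          H ((S.obj n).map g y, t) = (S.obj n).map g (H (y, t))) ∧
        (∀ y : U (S.obj n), H (y, 1) = (S.map (homOfLE (Nat.zero_le n))).app (SingleObj.star G)
            ((seqR S r n).app (SingleObj.star G) y))}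
  | 0 =>
    ⟨⟨Prod.fst, continuous_fst⟩, fun y t _ => rfl, fun g y t => rfl, fun y => by
      rw [show homOfLE (Nat.zero_le 0) = 𝟙 (0 : ℕ) from rfl, S.map_id]
      rfl⟩
  | n + 1 =>
    let prev : {H : C(U (S.obj n) × unitInterval, U (S.obj n)) //
        (∀ (y : U (S.obj n)) (t : unitInterval), (t : ℝ) ≤ (1/2 : ℝ) ^ n → H (y, t) = y) ∧
        (∀ (g : G) (y : U (S.obj n)) (t : unitInterval),
          H ((S.obj n).map g y, t) = (S.obj n).map g (H (y, t))) ∧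
        (∀ y : U (S.obj n), H (y, 1) = (S.map (homOfLE (Nat.zero_le n))).app (SingleObj.star G)
            ((seqR S r n).app (SingleObj.star G) y))} := seqH n
    let jn : C(U (S.obj n), U (S.obj (n+1))) :=
      ((S.map (homOfLE (Nat.le_succ n))).app (SingleObj.star G)).hom
    let rn : C(U (S.obj (n+1)), U (S.obj n)) := ((r n).app (SingleObj.star G)).hom
    ⟨⟨fun q => if (q.2 : ℝ) ≤ (1/2 : ℝ) ^ n then unc (h n) (q.1, clip n q.2)
        else jn (prev.1 (rn q.1, q.2)), by
      refine Continuous.if_le ?_ ?_ (continuous_subtype_val.comp continuous_snd)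
        continuous_const ?_
      · exact (unc (h n)).continuous.comp
          (continuous_fst.prodMk ((clip n).continuous.comp continuous_snd))
      · exact jn.continuous.comp (prev.1.continuous.comp
          ((rn.continuous.comp continuous_fst).prodMk continuous_snd))
      · rintro ⟨y, t⟩ ht
        show unc (h n) (y, clip n t) = jn (prev.1 (rn y, t))
        rw [clip_of_ge (le_of_eq ht.symm), prev.2.1 (rn y) t (le_of_eq ht)]
        have hy := congr_app (hh1 n) y
        simp only [comp_app'] at hy
        exact hy⟩,
      by
        intro y t ht
        have ht' : (t : ℝ) ≤ (1/2 : ℝ) ^ n := le_trans ht (halfpow_succ_le n)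
        show (if (t : ℝ) ≤ (1/2 : ℝ) ^ n then unc (h n) (y, clip n t)
          else jn (prev.1 (rn y, t))) = y
        rw [if_pos ht', clip_of_le ht]
        have hy := congr_app (hh0 n) y
        simp only [comp_app', id_app'] at hy
        exact hy,
      by
        intro g y t
        show (if (t : ℝ) ≤ (1/2 : ℝ) ^ n
            then unc (h n) ((S.obj (n+1)).map g y, clip n t)
            else jn (prev.1 (rn ((S.obj (n+1)).map g y), t)))
          = (S.obj (n+1)).map g (if (t : ℝ) ≤ (1/2 : ℝ) ^ n
            then unc (h n) (y, clip n t) else jn (prev.1 (rn y, t)))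
        split_ifs with ht
        · show toPath ((h n).app _ ((S.obj (n+1)).map g y)) (clip n t) = _
          rw [equivar (h n) g y]
          rfl
        · rw [show rn ((S.obj (n+1)).map g y) = (S.obj n).map g (rn y) from equivar (r n) g y,
            prev.2.2.1 g (rn y) t]
          exact equivar (S.map (homOfLE (Nat.le_succ n))) g (prev.1 (rn y, t)),
      by
        intro y
        show (if ((1 : unitInterval) : ℝ) ≤ (1/2 : ℝ) ^ n
            then unc (h n) (y, clip n 1) else jn (prev.1 (rn y, 1)))
          = (S.map (homOfLE (Nat.zero_le (n+1)))).app (SingleObj.star G)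
            ((seqR S r (n+1)).app (SingleObj.star G) y)
        have hseq : (seqR S r (n+1)).app (SingleObj.star G) y
            = (seqR S r n).app (SingleObj.star G) (rn y) := rfl
        clear_value prev
        rcases Nat.eq_zero_or_pos n with hn | hn
        · subst hn
          rw [if_pos (by norm_num : ((1 : unitInterval) : ℝ) ≤ (1/2 : ℝ) ^ 0),
            clip_of_ge (by norm_num), hseq]
          have hy := congr_app (hh1 0) y
          simp only [comp_app'] at hy
          have h00 : (seqR S r 0).app (SingleObj.star G) (rn y) = rn y := rfl
          rw [h00]
          exact hy
        · rw [if_neg (not_le.mpr (by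
            simpa using pow_lt_one₀ (by norm_num : (0:ℝ) ≤ 1/2) (by norm_num : (1/2:ℝ) < 1)
              hn.ne'))]
          rw [prev.2.2.2 (rn y), hseq]
          have hcomp : S.map (homOfLE (Nat.zero_le n)) ≫ S.map (homOfLE (Nat.le_succ n))
              = S.map (homOfLE (Nat.zero_le (n+1))) := by
            rw [← S.map_comp]
            rfl
          have := congr_app hcomp ((seqR S r n).app (SingleObj.star G) (rn y))
          simp only [comp_app'] at this
          exact this⟩

include hr in
lemma seqH_compat
    (hhrel : ∀ n, S.map (homOfLE (Nat.le_succ n)) ≫ h n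
      = S.map (homOfLE (Nat.le_succ n)) ≫ cst _)
    (n : ℕ) (y : U (S.obj n)) (t : unitInterval) :
    (seqH S r h hh0 hh1 (n+1)).1
        ((S.map (homOfLE (Nat.le_succ n))).app (SingleObj.star G) y, t)
      = (S.map (homOfLE (Nat.le_succ n))).app (SingleObj.star G)
        ((seqH S r h hh0 hh1 n).1 (y, t)) := by
  set jn : C(U (S.obj n), U (S.obj (n+1))) :=
    ((S.map (homOfLE (Nat.le_succ n))).app (SingleObj.star G)).hom with hjn
  set rn : C(U (S.obj (n+1)), U (S.obj n)) := ((r n).app (SingleObj.star G)).hom with hrn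
  show (if (t : ℝ) ≤ (1/2 : ℝ) ^ n
      then unc (h n) (jn y, clip n t)
      else jn ((seqH S r h hh0 hh1 n).1 (rn (jn y), t)))
    = jn ((seqH S r h hh0 hh1 n).1 (y, t))
  split_ifs with ht
  · have h1 : unc (h n) (jn y, clip n t) = jn y := by
      have hy := congr_app (hhrel n) y
      simp only [comp_app'] at hy
      show toPath ((h n).app _ (jn y)) (clip n t) = jn y
      rw [hy]
      rfl
    rw [h1, (seqH S r h hh0 hh1 n).2.1 y t ht]
  · have h2 : rn (jn y) = y := by
      have hy := congr_app (hr n) y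
      simp only [comp_app', id_app'] at hy
      exact hy
    rw [h2]

include hr in
lemma seqR_nat {n m : ℕ} (hle : n ≤ m) :
    S.map (homOfLE hle) ≫ seqR S r m = seqR S r n := by
  induction m, hle using Nat.le_induction with
  | base =>
      rw [show homOfLE (le_refl n) = 𝟙 n from rfl, S.map_id, Category.id_comp]
  | succ m hm ih =>
      rw [show (homOfLE (Nat.le_succ_of_le hm) : n ⟶ m + 1)
          = homOfLE hm ≫ homOfLE (Nat.le_succ m) from rfl,
        S.map_comp, show seqR S r (m+1) = r m ≫ seqR S r m from rfl,
        Category.assoc, ← Category.assoc (S.map (homOfLE (Nat.le_succ m))), hr m,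
        Category.id_comp, ih]

end Seq

lemma defR_seq (S : ℕ ⥤ GTop G)
    (hS : ∀ n : ℕ, DefR (S.map (homOfLE (Nat.le_succ n))))
    (c : Cocone S) (hc : IsColimit c) : DefR (c.ι.app 0) := by
  choose r h hr hh0 hh1 hhrel using hS
  -- the retraction
  have cRnat : ∀ ⦃n m : ℕ⦄ (f : n ⟶ m),
      S.map f ≫ seqR S r m = seqR S r n ≫ 𝟙 (S.obj 0) := by
    intro n m f
    rw [Category.comp_id, show f = homOfLE (leOfHom f) from rfl, seqR_nat S r hr]
  let cR : Cocone S :=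
    { pt := S.obj 0, ι := { app := fun n => seqR S r n, naturality := cRnat } }
  -- the homotopy
  let HH := seqH S r h hh0 hh1
  let K : ∀ n : ℕ, S.obj n ⟶ P c.pt := fun n =>
    mkH (HH n).1 (HH n).2.2.1 ≫ Pmap (c.ι.app n)
  have Ksucc : ∀ n : ℕ, S.map (homOfLE (Nat.le_succ n)) ≫ K (n+1) = K n := by
    intro n
    refine hom_ext' fun y => ContinuousMap.ext fun t => ?_
    show toPath ((Pmap (c.ι.app (n+1))).app _
        ((mkH (HH (n+1)).1 (HH (n+1)).2.2.1).app _
          ((S.map (homOfLE (Nat.le_succ n))).app _ y))) t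
      = toPath ((Pmap (c.ι.app n)).app _ ((mkH (HH n).1 (HH n).2.2.1).app _ y)) t
    rw [Pmap_app, Pmap_app, mkH_app, mkH_app,
      seqH_compat S r h hr hh0 hh1 hhrel n y t]
    have := congr_app (c.w (homOfLE (Nat.le_succ n))) ((HH n).1 (y, t))
    simp only [comp_app'] at this
    exact this
  have Knat : ∀ (n m : ℕ) (hle : n ≤ m), S.map (homOfLE hle) ≫ K m = K n := by
    intro n m hle
    induction m, hle using Nat.le_induction with
    | base =>
        rw [show homOfLE (le_refl n) = 𝟙 n from rfl, S.map_id, Category.id_comp]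
    | succ m hm ih =>
        rw [show (homOfLE (Nat.le_succ_of_le hm) : n ⟶ m + 1)
            = homOfLE hm ≫ homOfLE (Nat.le_succ m) from rfl,
          S.map_comp, Category.assoc, Ksucc m, ih]
  have cKnat : ∀ ⦃n m : ℕ⦄ (f : n ⟶ m), S.map f ≫ K m = K n ≫ 𝟙 (P c.pt) := by
    intro n m f
    rw [Category.comp_id, show f = homOfLE (leOfHom f) from rfl, Knat n m (leOfHom f)]
  let cK : Cocone S :=
    { pt := P c.pt, ι := { app := K, naturality := cKnat } }
  refine ⟨hc.desc cR, hc.desc cK, ?_, ?_, ?_, ?_⟩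
  · exact (hc.fac cR 0).trans rfl
  · refine hc.hom_ext fun n => ?_
    rw [← Category.assoc, hc.fac cK n]
    refine hom_ext' fun y => ?_
    show toPath ((Pmap (c.ι.app n)).app _ ((mkH (HH n).1 (HH n).2.2.1).app _ y)) 0
      = (c.ι.app n).app _ y
    rw [Pmap_app, mkH_app, (HH n).2.1 y 0 (by positivity)]
  · refine hc.hom_ext fun n => ?_
    rw [← Category.assoc, hc.fac cK n, ← Category.assoc, hc.fac cR n]
    show K n ≫ ev 1 c.pt = seqR S r n ≫ c.ι.app 0
    refine hom_ext' fun y => ?_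
    show toPath ((Pmap (c.ι.app n)).app _ ((mkH (HH n).1 (HH n).2.2.1).app _ y)) 1
      = (c.ι.app 0).app _ ((seqR S r n).app _ y)
    rw [Pmap_app, mkH_app, (HH n).2.2.2 y]
    have := congr_app (c.w (homOfLE (Nat.zero_le n))) ((seqR S r n).app _ y)
    simp only [comp_app'] at this
    exact this
  · rw [hc.fac cK 0]
    show K 0 = c.ι.app 0 ≫ cst c.pt
    refine hom_ext' fun y => ContinuousMap.ext fun t => ?_
    show toPath ((Pmap (c.ι.app 0)).app _ ((mkH (HH 0).1 (HH 0).2.2.1).app _ y)) t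
      = toPath ((cst c.pt).app _ ((c.ι.app 0).app _ y)) t
    rw [Pmap_app, mkH_app, cst_app]
    rfl

end Stmt18Aux
theorem stmt18 (F : Set (Subgroup G)) (hF : ∀ H ∈ F, IsClosed (H : Set G))
    {A X : GTop G} (f : A ⟶ X) (hf : CellIncl F f) :
    IsGDefRetractIncl f := by
  apply Stmt18Aux.defR_iff
  induction hf with
  | gen H hH n => exact Stmt18Aux.defR_gen H n
  | coprod f hf cA hA cB hB φ hφ ih => exact Stmt18Aux.defR_coprod f ih cA hA cB hB φ hφ
  | pushout s t hf hpo ih => exact Stmt18Aux.defR_pushout s t ih hpo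
  | seq S hS c hc ih => exact Stmt18Aux.defR_seq S ih c hc

end
end
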